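/- ℓ² is a flat ℓ^∞-module, but ℓ² is not a faithfully flat ℓ^∞-module. -/

import Mathlib

open Filter Topology
open scoped ENNReal

set_option synthInstance.maxHeartbeats 1000000
set_option maxHeartbeats 1000000

noncomputable section

/-- `ℓ^∞`: the Banach algebra of bounded complex sequences, realised as a subalgebra of the
algebra of all complex sequences, with pointwise (termwise) operations. -/
def linf : Subalgebra ℂ (ℕ → ℂ) where
  carrier := {f | Memℓp f ∞}
  mul_mem' {f g} hf hg := show Memℓp (f * g) ∞ from Memℓp.infty_mul hf hg
  one_mem' := show Memℓp (1 : ℕ → ℂ) ∞ from one_memℓp_infty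
  add_mem' {f g} hf hg := show Memℓp (f + g) ∞ from Memℓp.add hf hg
  zero_mem' := show Memℓp (0 : ℕ → ℂ) ∞ from zero_memℓp
  algebraMap_mem' c := show Memℓp (algebraMap ℂ (ℕ → ℂ) c) ∞ from algebraMap_memℓp_infty c

lemma memℓp_two_infty_mul {f g : ℕ → ℂ} (hf : Memℓp f ∞) (hg : Memℓp g 2) :
    Memℓp (f * g) 2 := by
  obtain ⟨C, hC⟩ := memℓp_infty_iff.1 hf
  have hC' : ∀ i, ‖f i‖ ≤ C := fun i => hC ⟨i, rfl⟩
  have hC0 : 0 ≤ C := (norm_nonneg (f 0)).trans (hC' 0)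
  apply memℓp_gen
  have hgs : Summable fun i => ‖g i‖ ^ (2 : ℝ≥0∞).toReal := hg.summable (by norm_num)
  refine (hgs.mul_left (C ^ (2 : ℝ≥0∞).toReal)).of_nonneg_of_le
      (fun i => Real.rpow_nonneg (norm_nonneg _) _) (fun i => ?_)
  calc ‖(f * g) i‖ ^ (2 : ℝ≥0∞).toReal
      ≤ (C * ‖g i‖) ^ (2 : ℝ≥0∞).toReal := by
        refine Real.rpow_le_rpow (norm_nonneg _) ?_ ENNReal.toReal_nonneg
        rw [Pi.mul_apply, norm_mul]
        exact mul_le_mul_of_nonneg_right (hC' i) (norm_nonneg _)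
    _ = C ^ (2 : ℝ≥0∞).toReal * ‖g i‖ ^ (2 : ℝ≥0∞).toReal :=
        Real.mul_rpow hC0 (norm_nonneg _)

/-- `ℓ²`: the Hilbert space of square-summable complex sequences, as a module over `ℓ^∞`,
the action being termwise multiplication. -/
def l2 : Submodule linf (ℕ → ℂ) where
  carrier := {f | Memℓp f 2}
  add_mem' {f g} hf hg := show Memℓp (f + g) 2 from Memℓp.add hf hg
  zero_mem' := show Memℓp (0 : ℕ → ℂ) 2 from zero_memℓp
  smul_mem' c f hf := by
    have hsmul : c • f = (c : ℕ → ℂ) * f := Algebra.smul_def c f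
    rw [Set.mem_setOf_eq, hsmul]
    exact memℓp_two_infty_mul c.2 hf

instance : CommRing linf := inferInstance
instance : Module linf (ℕ → ℂ) := inferInstance
instance : AddCommGroup l2 := inferInstance
instance : Module linf l2 := inferInstance

lemma single_mem_l2 (n : ℕ) : Pi.single n (1 : ℂ) ∈ l2 := by
  refine (memℓp_zero ?_).of_exponent_ge (by norm_num)
  refine (Set.finite_singleton n).subset ?_
  intro j hj
  simp only [Set.mem_setOf_eq] at hj
  simp only [Set.mem_singleton_iff]
  by_contra h
  exact hj (Pi.single_eq_of_ne h 1)

lemma l2_coe_sum_smul {ι : Type} [Fintype ι] (c : ι → linf) (y : ι → l2) (k : ℕ) :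
    ((∑ i, c i • y i : l2) : ℕ → ℂ) k = ∑ i, (c i : ℕ → ℂ) k * (y i : ℕ → ℂ) k := by
  rw [AddSubmonoidClass.coe_finset_sum, Finset.sum_apply]
  rfl

lemma l2_flat : Module.Flat linf l2 := by
  rw [Module.Flat.iff_forall_isTrivialRelation]
  intro n f x h
  classical
  set T : ℕ → ℝ := fun k => ∑ i, ‖(f i : ℕ → ℂ) k‖ ^ 2 with hTdef
  have hTmem : ∀ k i, ‖(f i : ℕ → ℂ) k‖ ^ 2 ≤ T k := by
    intro k i
    exact Finset.single_le_sum (f := fun i => ‖(f i : ℕ → ℂ) k‖ ^ 2)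
      (fun i _ => sq_nonneg _) (Finset.mem_univ i)
  have hTzero : ∀ k, T k = 0 → ∀ i, (f i : ℕ → ℂ) k = 0 := by
    intro k hk i
    have h1 : ‖(f i : ℕ → ℂ) k‖ ^ 2 ≤ 0 := hk ▸ hTmem k i
    have h2 : ‖(f i : ℕ → ℂ) k‖ ^ 2 = 0 := le_antisymm h1 (sq_nonneg _)
    simpa [pow_eq_zero_iff] using h2
  have hrel : ∀ k, ∑ i, (f i : ℕ → ℂ) k * (x i : ℕ → ℂ) k = 0 := by
    intro k
    have := congrFun (congrArg (Subtype.val) h) k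
    rwa [l2_coe_sum_smul] at this
  have hTsumC : ∀ k, (T k : ℂ) = ∑ i, (starRingEnd ℂ) ((f i : ℕ → ℂ) k) * (f i : ℕ → ℂ) k := by
    intro k
    push_cast [hTdef]
    refine Finset.sum_congr rfl fun i _ => ?_
    rw [Complex.conj_mul']
  set A : Fin n → Fin n → (ℕ → ℂ) := fun i j k =>
    (if i = j then 1 else 0) -
      (if T k = 0 then 0 else (starRingEnd ℂ) ((f i : ℕ → ℂ) k) * (f j : ℕ → ℂ) k / (T k : ℂ))
    with hAdef
  have hAbdd : ∀ i j, Memℓp (A i j) ∞ := by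
    intro i j
    refine memℓp_infty ⟨2, ?_⟩
    rintro r ⟨k, rfl⟩
    simp only [hAdef]
    by_cases hk : T k = 0
    · simp [hk]
      split <;> norm_num
    · have hTpos : 0 < T k := lt_of_le_of_ne (by positivity) (Ne.symm hk)
      refine (norm_sub_le _ _).trans ?_
      have h1 : ‖(if i = j then (1:ℂ) else 0)‖ ≤ 1 := by split <;> simp
      have h2 : ‖(if T k = 0 then 0 else
          (starRingEnd ℂ) ((f i : ℕ → ℂ) k) * (f j : ℕ → ℂ) k / (T k : ℂ))‖ ≤ 1 := by
        rw [if_neg hk]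
        rw [norm_div, norm_mul]
        have hnormT : ‖(T k : ℂ)‖ = T k := by
          rw [Complex.norm_real]
          exact Real.norm_of_nonneg hTpos.le
        rw [hnormT, RCLike.norm_conj]
        rw [div_le_one hTpos]
        have hi : ‖(f i : ℕ → ℂ) k‖ ≤ Real.sqrt (T k) :=
          (Real.le_sqrt (norm_nonneg _) hTpos.le).2 (hTmem k i)
        have hj : ‖(f j : ℕ → ℂ) k‖ ≤ Real.sqrt (T k) :=
          (Real.le_sqrt (norm_nonneg _) hTpos.le).2 (hTmem k j)
        calc ‖(f i : ℕ → ℂ) k‖ * ‖(f j : ℕ → ℂ) k‖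
            ≤ Real.sqrt (T k) * Real.sqrt (T k) :=
              mul_le_mul hi hj (norm_nonneg _) (Real.sqrt_nonneg _)
          _ = T k := Real.mul_self_sqrt hTpos.le
      linarith
  refine ⟨n, fun i j => ⟨A i j, hAbdd i j⟩, x, ?_, ?_⟩
  · intro i
    apply Subtype.ext
    funext k
    rw [l2_coe_sum_smul]
    show (x i : ℕ → ℂ) k = _
    by_cases hk : T k = 0
    · simp only [hAdef, hk, if_true, sub_zero]
      simp [Finset.sum_ite_eq, ite_mul]
    · simp only [hAdef, hk, if_false]
      rw [Finset.sum_congr rfl (fun j _ => sub_mul _ _ _), Finset.sum_sub_distrib]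
      have e1 : ∑ j, (if i = j then (1:ℂ) else 0) * (x j : ℕ → ℂ) k = (x i : ℕ → ℂ) k := by
        simp [Finset.sum_ite_eq, ite_mul]
      have e2 : ∑ j, (starRingEnd ℂ) ((f i : ℕ → ℂ) k) * (f j : ℕ → ℂ) k / (T k : ℂ)
            * (x j : ℕ → ℂ) k = 0 := by
        have : ∀ j, (starRingEnd ℂ) ((f i : ℕ → ℂ) k) * (f j : ℕ → ℂ) k / (T k : ℂ)
            * (x j : ℕ → ℂ) k
            = (starRingEnd ℂ) ((f i : ℕ → ℂ) k) / (T k : ℂ)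
              * ((f j : ℕ → ℂ) k * (x j : ℕ → ℂ) k) := fun j => by ring
        rw [Finset.sum_congr rfl (fun j _ => this j), ← Finset.mul_sum, hrel, mul_zero]
      rw [e1, e2, sub_zero]
  · intro j
    apply Subtype.ext
    rw [AddSubmonoidClass.coe_finset_sum]
    funext k
    rw [Finset.sum_apply]
    show ∑ i, (f i : ℕ → ℂ) k * A i j k = 0
    by_cases hk : T k = 0
    · rw [Finset.sum_eq_zero]
      intro i _
      rw [hTzero k hk i, zero_mul]
    · simp only [hAdef, hk, if_false]
      rw [Finset.sum_congr rfl (fun i _ => mul_sub _ _ _), Finset.sum_sub_distrib]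
      have e1 : ∑ i, (f i : ℕ → ℂ) k * (if i = j then (1:ℂ) else 0) = (f j : ℕ → ℂ) k := by
        simp [Finset.sum_ite_eq', mul_ite]
      have e2 : ∑ i, (f i : ℕ → ℂ) k *
          ((starRingEnd ℂ) ((f i : ℕ → ℂ) k) * (f j : ℕ → ℂ) k / (T k : ℂ))
          = (f j : ℕ → ℂ) k := by
        have : ∀ i, (f i : ℕ → ℂ) k *
            ((starRingEnd ℂ) ((f i : ℕ → ℂ) k) * (f j : ℕ → ℂ) k / (T k : ℂ))
            = ((starRingEnd ℂ) ((f i : ℕ → ℂ) k) * (f i : ℕ → ℂ) k)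
              * ((f j : ℕ → ℂ) k / (T k : ℂ)) := fun i => by ring
        rw [Finset.sum_congr rfl (fun i _ => this i), ← Finset.sum_mul, ← hTsumC]
        have hkC : (T k : ℂ) ≠ 0 := by exact_mod_cast hk
        field_simp
      rw [e1, e2, sub_self]

lemma memℓp_two_iff {g : ℕ → ℂ} : Memℓp g 2 ↔ Summable (fun n => ‖g n‖ ^ 2) := by
  constructor
  · intro h
    have := h.summable (p := 2) (by norm_num)
    simpa [ENNReal.toReal_ofNat, Real.rpow_natCast] using this
  · intro h
    apply memℓp_gen
    simpa [ENNReal.toReal_ofNat, Real.rpow_natCast] using h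

lemma exists_decomp (x : ℕ → ℂ) (hx : Memℓp x 2) :
    ∃ (a g : ℕ → ℂ), Memℓp a ∞ ∧ Filter.Tendsto a Filter.atTop (𝓝 0) ∧ Memℓp g 2 ∧
      x = a * g := by
  have hsum : Summable (fun n => ‖x n‖ ^ 2) := memℓp_two_iff.1 hx
  set Tt : ℝ := ∑' n, ‖x n‖ ^ 2 with hTt
  set s : ℕ → ℝ := fun n => Tt - ∑ k ∈ Finset.range n, ‖x k‖ ^ 2 with hs
  have hs_nonneg : ∀ n, 0 ≤ s n := by
    intro n
    have := Summable.sum_le_tsum (Finset.range n) (fun k _ => sq_nonneg ‖x k‖) hsum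
    simp only [hs]
    linarith
  have hdiff : ∀ n, s n - s (n + 1) = ‖x n‖ ^ 2 := by
    intro n
    simp only [hs, Finset.sum_range_succ]
    ring
  have hstep : ∀ n, s (n + 1) ≤ s n := by
    intro n
    have := hdiff n
    have := sq_nonneg ‖x n‖
    linarith [hdiff n]
  have hmono : Antitone s := antitone_nat_of_succ_le hstep
  have hs_tendsto : Filter.Tendsto s Filter.atTop (𝓝 0) := by
    have h1 := hsum.hasSum.tendsto_sum_nat
    have h2 : Filter.Tendsto (fun n => Tt - ∑ k ∈ Finset.range n, ‖x k‖ ^ 2)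
        Filter.atTop (𝓝 (Tt - Tt)) := tendsto_const_nhds.sub h1
    simpa using h2
  set a : ℕ → ℂ := fun n => ((Real.sqrt (Real.sqrt (s n)) : ℝ) : ℂ) with ha
  set g : ℕ → ℂ := fun n => if s n = 0 then 0 else x n / a n with hg
  have hxzero : ∀ n, s n = 0 → x n = 0 := by
    intro n hn
    have h1 : ‖x n‖ ^ 2 ≤ 0 := by
      have := hdiff n
      have := hs_nonneg (n + 1)
      linarith
    have : ‖x n‖ = 0 := by nlinarith [sq_nonneg ‖x n‖, norm_nonneg (x n)]
    simpa using this
  refine ⟨a, g, ?_, ?_, ?_, ?_⟩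
  · refine memℓp_infty ⟨Real.sqrt (Real.sqrt (s 0)), ?_⟩
    rintro r ⟨n, rfl⟩
    simp only [ha, Complex.norm_real]
    rw [Real.norm_of_nonneg (Real.sqrt_nonneg _)]
    exact Real.sqrt_le_sqrt (Real.sqrt_le_sqrt (hmono (Nat.zero_le n)))
  · have hc1 : Filter.Tendsto (fun n => Real.sqrt (s n)) Filter.atTop (𝓝 0) := by
      have := (Real.continuous_sqrt.tendsto 0).comp hs_tendsto
      simpa [Function.comp_def] using this
    have hc : Filter.Tendsto (fun n => Real.sqrt (Real.sqrt (s n))) Filter.atTop (𝓝 0) := by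
      have := (Real.continuous_sqrt.tendsto 0).comp hc1
      simpa [Function.comp_def] using this
    have := (Complex.continuous_ofReal.tendsto 0).comp hc
    simpa [ha, Function.comp_def] using this
  · rw [memℓp_two_iff]
    have htel : Summable (fun n => 2 * (Real.sqrt (s n) - Real.sqrt (s (n + 1)))) := by
      refine Summable.mul_left 2 ?_
      apply summable_of_sum_range_le (c := Real.sqrt (s 0))
      · intro n
        have := Real.sqrt_le_sqrt (hstep n)
        linarith
      · intro n
        rw [Finset.sum_range_sub' (fun k => Real.sqrt (s k))]
        have := Real.sqrt_nonneg (s n)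
        linarith
    refine htel.of_nonneg_of_le (fun n => sq_nonneg _) ?_
    intro n
    by_cases hn : s n = 0
    · have hn1 : s (n + 1) = 0 := le_antisymm (hn ▸ hstep n) (hs_nonneg _)
      simp [hg, hn, hn1]
    · have hspos : 0 < s n := lt_of_le_of_ne (hs_nonneg n) (Ne.symm hn)
      have hapos : 0 < Real.sqrt (Real.sqrt (s n)) := Real.sqrt_pos.2 (Real.sqrt_pos.2 hspos)
      have hnormg : ‖g n‖ ^ 2 = ‖x n‖ ^ 2 / Real.sqrt (s n) := by
        simp only [hg, if_neg hn, ha]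
        rw [norm_div, Complex.norm_real, Real.norm_of_nonneg (Real.sqrt_nonneg _), div_pow,
          Real.sq_sqrt (Real.sqrt_nonneg _)]
      rw [hnormg, ← hdiff n]
      set u := Real.sqrt (s n) with hu
      set v := Real.sqrt (s (n + 1)) with hv
      have hupos : 0 < u := Real.sqrt_pos.2 hspos
      have hvnonneg : 0 ≤ v := Real.sqrt_nonneg _
      have hvu : v ≤ u := Real.sqrt_le_sqrt (hstep n)
      have hu2 : u ^ 2 = s n := Real.sq_sqrt (hs_nonneg n)
      have hv2 : v ^ 2 = s (n + 1) := Real.sq_sqrt (hs_nonneg (n + 1))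
      rw [← hu2, ← hv2, div_le_iff₀ hupos]
      nlinarith [sq_nonneg (u - v)]
  · funext n
    by_cases hn : s n = 0
    · simp [hg, hn, hxzero n hn]
    · have hspos : 0 < s n := lt_of_le_of_ne (hs_nonneg n) (Ne.symm hn)
      have hapos : 0 < Real.sqrt (Real.sqrt (s n)) := Real.sqrt_pos.2 (Real.sqrt_pos.2 hspos)
      have hane : a n ≠ 0 := by
        simp only [ha]
        exact_mod_cast ne_of_gt (by exact_mod_cast hapos : (0:ℝ) < Real.sqrt (Real.sqrt (s n)))
      show x n = a n * g n
      rw [hg]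
      simp only [if_neg hn]
      rw [mul_div_cancel₀ _ hane]

def Jc0 : Ideal linf where
  carrier := {f | Filter.Tendsto (f : ℕ → ℂ) Filter.atTop (𝓝 0)}
  add_mem' {f g} hf hg := by
    have := hf.add hg
    rw [add_zero] at this
    exact this
  zero_mem' := by
    show Filter.Tendsto ((0 : linf) : ℕ → ℂ) Filter.atTop (𝓝 0)
    exact tendsto_const_nhds
  smul_mem' c f hf := by
    show Filter.Tendsto ((c * f : linf) : ℕ → ℂ) Filter.atTop (𝓝 0)
    obtain ⟨C, hC⟩ := memℓp_infty_iff.1 c.2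
    have hbdd : Filter.IsBoundedUnder (· ≤ ·) Filter.atTop (fun n => ‖(c : ℕ → ℂ) n‖) :=
      Filter.isBoundedUnder_of ⟨C, fun n => hC ⟨n, rfl⟩⟩
    have := NormedField.tendsto_zero_smul_of_tendsto_zero_of_bounded hf hbdd
    have heq : ((f : ℕ → ℂ) • fun n => (c : ℕ → ℂ) n) = ((c * f : linf) : ℕ → ℂ) := by
      funext n
      show (f : ℕ → ℂ) n * (c : ℕ → ℂ) n = (c : ℕ → ℂ) n * (f : ℕ → ℂ) n
      ring
    rwa [heq] at this

lemma Jc0_ne_top : Jc0 ≠ ⊤ := by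
  intro h
  have h1 : (1 : linf) ∈ Jc0 := h ▸ Submodule.mem_top
  have h2 : Filter.Tendsto (fun _ : ℕ => (1 : ℂ)) Filter.atTop (𝓝 0) := h1
  have := tendsto_nhds_unique h2 tendsto_const_nhds
  exact one_ne_zero (α := ℂ) this.symm

lemma not_ff : ¬ Module.FaithfullyFlat linf l2 := by
  intro hFF
  obtain ⟨m, hm, hJm⟩ := Ideal.exists_le_maximal Jc0 Jc0_ne_top
  refine hFF.submodule_ne_top hm ?_
  rw [eq_top_iff]
  rintro x -
  obtain ⟨a, g, hainf, ha0, hg2, hxeq⟩ := exists_decomp (x : ℕ → ℂ) x.2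
  have hx : x = (⟨a, hainf⟩ : linf) • (⟨g, hg2⟩ : l2) := by
    apply Subtype.ext
    rw [hxeq]
    rfl
  rw [hx]
  exact Submodule.smul_mem_smul (hJm ha0) Submodule.mem_top


/-- `ℓ²` is a flat `ℓ^∞`-module, but `ℓ²` is not a faithfully flat
`ℓ^∞`-module. -/
theorem l2_flat_not_faithfully_flat :
    Module.Flat linf l2 ∧ ¬ Module.FaithfullyFlat linf l2 := by
  exact ⟨l2_flat, not_ff⟩
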